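/- For p an odd integer ≥ 3, set A_p := { θ ∈ (0, 2π) : θ ≠ π and cos(pθ/2)/cos(θ/2) < 0 }. Then for every odd p ≥ 3 there exists an odd q > p such that every connected component of A_p and every connected component of (0,2π) \ A_p contains points of both A_q and of (0,2π) \ A_q. In particular q can be taken to be any sufficiently large odd integer. -/

import Mathlib

open Real Set

/-- For `p` odd `≥ 3`, the set of angles `θ ∈ (0, 2π)`, `θ ≠ π`, where the signature-type
quantity `D_p(e^(iθ)) = cos (p θ / 2) / cos (θ / 2)` is negative. -/
noncomputable def Aset (p : ℕ) : Set ℝ :=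
  {θ : ℝ | θ ∈ Set.Ioo 0 (2 * Real.pi) ∧ θ ≠ Real.pi ∧
    Real.cos (p * θ / 2) / Real.cos (θ / 2) < 0}

/-- The complement of `Aset p` inside `(0, 2π) \ {π}`. -/
noncomputable def Bset (p : ℕ) : Set ℝ :=
  (Set.Ioo 0 (2 * Real.pi) \ {Real.pi}) \ Aset p

lemma div_neg_iff_mul_neg {a b : ℝ} : a / b < 0 ↔ a * b < 0 :=
  div_neg_iff.trans mul_neg_iff.symm

lemma cosHalf_ne_zero {x : ℝ} (hx : x ∈ Ioo 0 (2*π)) (hxpi : x ≠ π) :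
    Real.cos (x/2) ≠ 0 := by
  intro h
  rcases Real.cos_eq_zero_iff.1 h with ⟨k, hk⟩
  have hπ := Real.pi_pos
  have hx1 := hx.1
  have hx2 := hx.2
  have hx' : x = (2*(k:ℝ)+1)*π := by linarith
  have h1 : (0:ℝ) < 2*k+1 := by nlinarith
  have h2 : (2*(k:ℝ)+1) < 2 := by nlinarith
  have h1' : (0:ℤ) < 2*k+1 := by exact_mod_cast h1
  have h2' : (2*k+1:ℤ) < 2 := by exact_mod_cast h2
  have : k = 0 := by omega
  subst this
  apply hxpi
  rw [hx']; push_cast; ring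

lemma cos_ne_zero_of_between (k : ℤ) {y : ℝ} (h1 : (2*(k:ℝ)-1)*π/2 < y)
    (h2 : y < (2*(k:ℝ)+1)*π/2) : Real.cos y ≠ 0 := by
  intro h
  rcases Real.cos_eq_zero_iff.1 h with ⟨n, hn⟩
  subst hn
  have hπ := Real.pi_pos
  have e1 : (2*(k:ℝ)-1) < 2*n+1 := by nlinarith
  have e2 : (2*(n:ℝ)+1) < 2*k+1 := by nlinarith
  have e1' : (2*k-1:ℤ) < 2*n+1 := by exact_mod_cast e1
  have e2' : (2*n+1:ℤ) < 2*k+1 := by exact_mod_cast e2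
  omega

lemma mem_Aset_iff {p : ℕ} {x : ℝ} :
    x ∈ Aset p ↔ x ∈ Ioo 0 (2*π) ∧ x ≠ π ∧ Real.cos (p*x/2) * Real.cos (x/2) < 0 := by
  unfold Aset
  simp only [mem_setOf_eq, div_neg_iff_mul_neg]

lemma mem_Bset_iff {p : ℕ} {x : ℝ} :
    x ∈ Bset p ↔ x ∈ Ioo 0 (2*π) ∧ x ≠ π ∧ ¬(Real.cos (p*x/2) * Real.cos (x/2) < 0) := by
  unfold Bset Aset
  simp only [mem_diff, mem_singleton_iff, mem_setOf_eq, div_neg_iff_mul_neg]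
  tauto

lemma sign_const {p : ℕ} {a b : ℝ} (hsub : Ioo a b ⊆ Ioo 0 (2*π)) (hpi : π ∉ Ioo a b)
    (hne : ∀ x ∈ Ioo a b, Real.cos (p*x/2) ≠ 0) {x y : ℝ} (hx : x ∈ Ioo a b) (hy : y ∈ Ioo a b)
    (hgx : Real.cos (p*x/2) * Real.cos (x/2) < 0) :
    Real.cos (p*y/2) * Real.cos (y/2) < 0 := by
  set f : ℝ → ℝ := fun t => Real.cos (p*t/2) * Real.cos (t/2) with hf
  have hcont : Continuous f := by fun_prop
  have hzero : ∀ t ∈ Ioo a b, f t ≠ 0 := by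
    intro t ht
    have h1 : Real.cos (p*t/2) ≠ 0 := hne t ht
    have h2 : Real.cos (t/2) ≠ 0 := by
      refine cosHalf_ne_zero (hsub ht) ?_
      rintro rfl; exact hpi ht
    exact mul_ne_zero h1 h2
  by_contra hgy
  have hgy' : 0 < f y := lt_of_le_of_ne (not_lt.1 hgy) (Ne.symm (hzero y hy))
  have hIcc : ∀ u v : ℝ, u ∈ Ioo a b → v ∈ Ioo a b → Icc u v ⊆ Ioo a b := by
    intro u v hu hv
    exact Icc_subset_Ioo hu.1 hv.2
  rcases le_total x y with hxy | hxy
  · have := intermediate_value_Icc hxy hcont.continuousOn (f := f)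
    have h0 : (0:ℝ) ∈ Icc (f x) (f y) := ⟨le_of_lt hgx, le_of_lt hgy'⟩
    rcases this h0 with ⟨c, hc, hc0⟩
    exact hzero c (hIcc x y hx hy hc) hc0
  · have := intermediate_value_Icc' hxy hcont.continuousOn (f := f)
    have h0 : (0:ℝ) ∈ Icc (f x) (f y) := ⟨le_of_lt hgx, le_of_lt hgy'⟩
    rcases this h0 with ⟨c, hc, hc0⟩
    exact hzero c (hIcc y x hy hx hc) hc0

lemma exists_interval (p : ℕ) (hodd : Odd p) (hp : 3 ≤ p) {θ : ℝ}
    (hθ : θ ∈ Ioo 0 (2*π)) (hθpi : θ ≠ π) (hnz : Real.cos (p*θ/2) ≠ 0) :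
    ∃ a b : ℝ, a < θ ∧ θ < b ∧ π/p ≤ b - a ∧ Ioo a b ⊆ Ioo 0 (2*π) ∧ π ∉ Ioo a b ∧
      ∀ x ∈ Ioo a b, Real.cos (p*x/2) ≠ 0 := by
  have hπ := Real.pi_pos
  have hp0 : (0:ℝ) < p := by positivity
  obtain ⟨k, hXlo', hXhi'⟩ :
      ∃ k : ℤ, ((2*(k:ℝ)-1)*π/p < θ) ∧ (θ < (2*(k:ℝ)+1)*π/p) := by
    set X : ℝ := p*θ/(2*π) with hX
    have hθX : (p:ℝ)*θ/2 = π*X := by rw [hX]; field_simp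
    obtain ⟨r, hr⟩ : ∃ r : ℤ, |X - (r:ℝ)| ≤ 1/2 := ⟨round X, abs_sub_round X⟩
    clear_value X
    refine ⟨r, ?_, ?_⟩
    · have hlo : (r:ℝ) - 1/2 ≤ X := by have := abs_le.1 hr; linarith [this.2]
      have hne : X ≠ (r:ℝ) - 1/2 := by
        intro hm
        apply hnz
        rw [Real.cos_eq_zero_iff]
        exact ⟨r - 1, by rw [hθX, hm]; push_cast; ring⟩
      have hlo' : (r:ℝ) - 1/2 < X := lt_of_le_of_ne hlo (Ne.symm hne)
      rw [div_lt_iff₀ hp0]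
      nlinarith
    · have hhi : X ≤ (r:ℝ) + 1/2 := by have := abs_le.1 hr; linarith [this.1]
      have hne : X ≠ (r:ℝ) + 1/2 := by
        intro hm
        apply hnz
        rw [Real.cos_eq_zero_iff]
        exact ⟨r, by rw [hθX, hm]; push_cast; ring⟩
      have hhi' : X < (r:ℝ) + 1/2 := lt_of_le_of_ne hhi hne
      rw [lt_div_iff₀ hp0]
      nlinarith
  have hk0 : 0 ≤ k := by
    by_contra hneg
    have h1' : (k:ℝ) ≤ -1 := by exact_mod_cast (by omega : k ≤ -1)
    have : (2*(k:ℝ)+1)*π/p ≤ 0 :=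
      div_nonpos_of_nonpos_of_nonneg (by nlinarith) hp0.le
    linarith [hθ.1, hXhi']
  have hkp : k ≤ p := by
    by_contra hbig
    have h1' : (p:ℝ) + 1 ≤ (k:ℝ) := by exact_mod_cast (by omega : (p:ℤ) + 1 ≤ k)
    have : 2*π ≤ (2*(k:ℝ)-1)*π/p := by
      rw [le_div_iff₀ hp0]; nlinarith
    linarith [hXlo', hθ.2]
  rcases hodd with ⟨m, hm⟩
  have hmk : (p:ℤ) = 2*m+1 := by exact_mod_cast hm
  refine ⟨max ((2*(k:ℝ)-1)*π/p) 0, min ((2*(k:ℝ)+1)*π/p) (2*π), max_lt hXlo' hθ.1,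
    lt_min hXhi' hθ.2, ?_, Ioo_subset_Ioo (le_max_right _ _) (min_le_right _ _), ?_, ?_⟩
  · -- length
    have hπp2π : π/(p:ℝ) ≤ 2*π := by
      have : π/(p:ℝ) ≤ π := div_le_self hπ.le (by exact_mod_cast (by omega : 1 ≤ p))
      linarith
    by_cases h0 : (2*(k:ℝ)-1)*π/p < 0
    · have hk0' : k = 0 := by
        by_contra hne
        have h1' : (1:ℝ) ≤ (k:ℝ) := by exact_mod_cast (by omega : (1:ℤ) ≤ k)
        have : 0 ≤ (2*(k:ℝ)-1)*π/p :=
          div_nonneg (mul_nonneg (by linarith) hπ.le) hp0.le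
        linarith
      subst hk0'
      have e1 : (2*((0:ℤ):ℝ)-1)*π/(p:ℝ) = -(π/p) := by push_cast; ring
      have e2 : (2*((0:ℤ):ℝ)+1)*π/(p:ℝ) = π/p := by push_cast; ring
      rw [e1, e2, max_eq_right (neg_nonpos.mpr (by positivity)), min_eq_left hπp2π]
      norm_num
    · push_neg at h0
      rw [max_eq_left h0]
      by_cases h2 : (2*(k:ℝ)+1)*π/p ≤ 2*π
      · rw [min_eq_left h2]
        have e : (2*(k:ℝ)+1)*π/p - (2*(k:ℝ)-1)*π/p = 2*(π/p) := by field_simp; ring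
        have : 0 < π/(p:ℝ) := by positivity
        linarith
      · push_neg at h2
        rw [min_eq_right h2.le]
        have hkp' : k = p := by
          by_contra hne
          have h1' : (k:ℝ) ≤ (p:ℝ) - 1 := by exact_mod_cast (by omega : k ≤ (p:ℤ) - 1)
          have : (2*(k:ℝ)+1)*π/p ≤ 2*π := by
            rw [div_le_iff₀ hp0]; nlinarith
          linarith
        subst hkp'
        have e : (2*(((p:ℕ)):ℝ)-1)*π/(p:ℝ) = 2*π - π/p := by field_simp
        rw [show ((2:ℝ)*((p:ℤ):ℝ)-1) = 2*(p:ℝ)-1 by push_cast; ring, e]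
        linarith
  · -- π not in interval
    intro hmem
    rcases lt_or_gt_of_ne hθpi with hlt | hgt
    · have h1 : (2*(k:ℝ)-1)*π/p < π := lt_trans hXlo' hlt
      have h2 : (2*(k:ℝ)-1)*π < π*p := by rw [div_lt_iff₀ hp0] at h1; linarith
      have h3 : 2*(k:ℝ)-1 < p := by nlinarith
      have h4 : (2*k-1:ℤ) < p := by exact_mod_cast h3
      have h6 : (2*(k:ℝ)+1) ≤ p := by exact_mod_cast (by omega : (2*k+1:ℤ) ≤ p)
      have h7 : (2*(k:ℝ)+1)*π/p ≤ π := by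
        rw [div_le_iff₀ hp0]; nlinarith
      have := hmem.2
      have := min_le_left ((2*(k:ℝ)+1)*π/p) (2*π)
      linarith
    · have h1 : π < (2*(k:ℝ)+1)*π/p := lt_trans hgt hXhi'
      have h2 : π*p < (2*(k:ℝ)+1)*π := by rw [lt_div_iff₀ hp0] at h1; linarith
      have h3 : (p:ℝ) < 2*(k:ℝ)+1 := by nlinarith
      have h4 : (p:ℤ) < 2*k+1 := by exact_mod_cast h3
      have h6 : (p:ℝ) ≤ 2*(k:ℝ)-1 := by exact_mod_cast (by omega : (p:ℤ) ≤ 2*k-1)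
      have h7 : π ≤ (2*(k:ℝ)-1)*π/p := by
        rw [le_div_iff₀ hp0]; nlinarith
      have := hmem.1
      have := le_max_left ((2*(k:ℝ)-1)*π/p) 0
      linarith
  · intro x hx
    have hx1 : (2*(k:ℝ)-1)*π/p < x := lt_of_le_of_lt (le_max_left _ _) hx.1
    have hx2 : x < (2*(k:ℝ)+1)*π/p := lt_of_lt_of_le hx.2 (min_le_left _ _)
    apply cos_ne_zero_of_between k
    · rw [div_lt_iff₀ hp0] at hx1
      linarith
    · rw [lt_div_iff₀ hp0] at hx2
      linarith

lemma same_side_pos {x y : ℝ} (hx : x ∈ Ioo 0 (2*π)) (hy : y ∈ Ioo 0 (2*π))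
    (hxpi : x ≠ π) (hypi : y ≠ π) (hside : x < π ↔ y < π) :
    0 < Real.cos (x/2) * Real.cos (y/2) := by
  have hπ := Real.pi_pos
  have key : ∀ z : ℝ, z ∈ Ioo 0 (2*π) → (z < π → 0 < Real.cos (z/2)) ∧
      (π < z → Real.cos (z/2) < 0) := by
    intro z hz
    constructor
    · intro h
      apply Real.cos_pos_of_mem_Ioo
      constructor <;> [linarith [hz.1]; linarith]
    · intro h
      apply Real.cos_neg_of_pi_div_two_lt_of_lt <;> [linarith; linarith [hz.2]]
  rcases lt_or_gt_of_ne hxpi with h | h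
  · exact mul_pos ((key x hx).1 h) ((key y hy).1 (hside.1 h))
  · have hy' : π < y := lt_of_le_of_ne (not_lt.1 (fun hc => absurd (hside.2 hc) (not_lt.2 h.le))) (Ne.symm hypi)
    exact mul_pos_of_neg_of_neg ((key x hx).2 h) ((key y hy).2 hy')

set_option maxHeartbeats 1000000 in
lemma meets (p q : ℕ) (hp : 3 ≤ p) (hq5 : 5*p ≤ q) (hqodd : Odd q) {a b : ℝ}
    (hlen : π/p ≤ b - a) (hsub : Ioo a b ⊆ Ioo 0 (2*π)) (hpi : π ∉ Ioo a b) :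
    (Ioo a b ∩ Aset q).Nonempty ∧ (Ioo a b ∩ Bset q).Nonempty := by
  have hπ := Real.pi_pos
  have hp0 : (0:ℝ) < p := by positivity
  have hq3 : 3 ≤ q := by omega
  have hq0 : (0:ℝ) < q := by positivity
  set j : ℤ := ⌊q*a/(2*π)⌋ + 1 with hj
  set x₁ : ℝ := 2*j*π/q with hx₁
  set x₂ : ℝ := 2*(j+1)*π/q with hx₂
  clear_value x₂
  clear_value x₁
  clear_value j
  have hfl := Int.floor_le (q*a/(2*π))
  have hfl2 := Int.lt_floor_add_one (q*a/(2*π))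
  have hax₁ : a < x₁ := by
    rw [hx₁, lt_div_iff₀ hq0]
    have : q*a/(2*π) < (j:ℝ) := by push_cast [hj]; linarith
    rw [div_lt_iff₀ (by positivity : (0:ℝ) < 2*π)] at this
    linarith
  have hq45 : 4*π/q ≤ 4*π/(5*p) := by
    apply div_le_div_of_nonneg_left (by positivity) (by positivity)
    exact_mod_cast hq5
  have hq4p : 4*π/q < π/p := by
    have : 4*π/(5*(p:ℝ)) < π/p := by
      rw [div_lt_div_iff₀ (by positivity) hp0]
      nlinarith
    linarith
  have hx₂b : x₂ < b := by
    have hjle : (j:ℝ) - 1 ≤ q*a/(2*π) := by push_cast [hj]; linarith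
    have h2 : ((j:ℝ) - 1)*(2*π) ≤ q*a := (le_div_iff₀ (by positivity : (0:ℝ) < 2*π)).1 hjle
    have : x₂ ≤ a + 4*π/q := by
      rw [hx₂, div_le_iff₀ hq0]
      have e : (a + 4*π/q)*q = a*q + 4*π := by field_simp
      rw [e]
      nlinarith
    linarith
  have hx₁x₂ : x₁ < x₂ := by
    rw [hx₁, hx₂, div_lt_div_iff₀ hq0 hq0]
    nlinarith
  have hx₁m : x₁ ∈ Ioo a b := ⟨hax₁, lt_trans hx₁x₂ hx₂b⟩
  have hx₂m : x₂ ∈ Ioo a b := ⟨lt_trans hax₁ hx₁x₂, hx₂b⟩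
  -- neither is π
  have hnepi : ∀ i : ℤ, (2*(i:ℝ)*π/q ≠ π) := by
    intro i hc
    have h1 : 2*(i:ℝ)*π = π*q := by
      rw [div_eq_iff (ne_of_gt hq0)] at hc; linarith
    have h2i : 2*(i:ℝ) = q := by
      have hπne : π ≠ 0 := ne_of_gt hπ
      have := mul_right_cancel₀ hπne (by linarith : 2*(i:ℝ)*π = (q:ℝ)*π)
      exact this
    have h3 : (2*i:ℤ) = q := by exact_mod_cast h2i
    rcases hqodd with ⟨t, ht⟩
    omega
  have hx₁pi : x₁ ≠ π := by rw [hx₁]; exact hnepi j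
  have hx₂pi : x₂ ≠ π := by
    have := hnepi (j+1); push_cast at this; rw [hx₂]; exact this
  -- cos values
  have hc₁ : Real.cos (q*x₁/2) = Real.cos (j*π) := by
    congr 1; rw [hx₁]; field_simp
  have hc₂ : Real.cos (q*x₂/2) = -Real.cos (j*π) := by
    have e : (q:ℝ)*x₂/2 = j*π + π := by rw [hx₂]; field_simp
    rw [e, Real.cos_add_pi]
  have hcsq : Real.cos ((j:ℝ)*π) ^ 2 = 1 := by
    have hs : Real.sin ((j:ℝ)*π) = 0 := Real.sin_int_mul_pi j
    have := Real.sin_sq_add_cos_sq ((j:ℝ)*π)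
    nlinarith
  -- same side of π
  have hside2 : x₂ < π ∨ π < x₁ := by
    rcases lt_trichotomy x₂ π with h | h | h
    · exact Or.inl h
    · exact absurd h hx₂pi
    · rcases lt_trichotomy x₁ π with h' | h' | h'
      · exact absurd (⟨lt_trans hx₁m.1 h', lt_trans h hx₂m.2⟩ : π ∈ Ioo a b) hpi
      · exact absurd h' hx₁pi
      · exact Or.inr h'
  have hside : x₁ < π ↔ x₂ < π := by
    rcases hside2 with h | h
    · exact ⟨fun _ => h, fun _ => lt_trans hx₁x₂ h⟩
    · constructor <;> intro h' <;> [linarith; linarith]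
  have hd : 0 < Real.cos (x₁/2) * Real.cos (x₂/2) :=
    same_side_pos (hsub hx₁m) (hsub hx₂m) hx₁pi hx₂pi hside
  have hgg : (Real.cos (q*x₁/2) * Real.cos (x₁/2)) * (Real.cos (q*x₂/2) * Real.cos (x₂/2)) < 0 := by
    rw [hc₁, hc₂]
    have e : (Real.cos ((j:ℝ)*π) * Real.cos (x₁/2)) * (-Real.cos ((j:ℝ)*π) * Real.cos (x₂/2))
        = -(Real.cos ((j:ℝ)*π)^2 * (Real.cos (x₁/2) * Real.cos (x₂/2))) := by ring
    rw [e, hcsq]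
    linarith
  rcases lt_or_ge (Real.cos (q*x₁/2) * Real.cos (x₁/2)) 0 with h | h
  · refine ⟨⟨x₁, hx₁m, mem_Aset_iff.2 ⟨hsub hx₁m, hx₁pi, h⟩⟩,
      ⟨x₂, hx₂m, mem_Bset_iff.2 ⟨hsub hx₂m, hx₂pi, ?_⟩⟩⟩
    intro hneg
    have := mul_pos_of_neg_of_neg h hneg
    linarith
  · refine ⟨⟨x₂, hx₂m, mem_Aset_iff.2 ⟨hsub hx₂m, hx₂pi, ?_⟩⟩,
      ⟨x₁, hx₁m, mem_Bset_iff.2 ⟨hsub hx₁m, hx₁pi, not_lt.2 h⟩⟩⟩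
    by_contra hc
    push_neg at hc
    have := mul_nonneg h hc
    linarith

set_option maxHeartbeats 4000000 in
lemma compA (p : ℕ) (hodd : Odd p) (hp : 3 ≤ p) {θ : ℝ} (hθ : θ ∈ Aset p) :
    ∃ a b : ℝ, π/p ≤ b - a ∧ Ioo a b ⊆ Ioo 0 (2*π) ∧ π ∉ Ioo a b ∧
      Ioo a b ⊆ connectedComponentIn (Aset p) θ := by
  obtain ⟨hdom, hθpi, hg⟩ := mem_Aset_iff.1 hθ
  have hnz : Real.cos (p*θ/2) ≠ 0 := by
    intro hz; rw [hz, zero_mul] at hg; exact lt_irrefl 0 hg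
  obtain ⟨a, b, haθ, hθb, hlen, hsub, hpi, hnzI⟩ := exists_interval p hodd hp hdom hθpi hnz
  have hθI : θ ∈ Ioo a b := ⟨haθ, hθb⟩
  have hsubA : Ioo a b ⊆ Aset p := by
    intro x hx
    refine mem_Aset_iff.2 ⟨hsub hx, fun hc => hpi (hc ▸ hx), ?_⟩
    exact sign_const hsub hpi hnzI hθI hx hg
  exact ⟨a, b, hlen, hsub, hpi,
    isPreconnected_Ioo.subset_connectedComponentIn hθI hsubA⟩

set_option maxHeartbeats 4000000 in
lemma compB (p : ℕ) (hodd : Odd p) (hp : 3 ≤ p) {θ : ℝ} (hθ : θ ∈ Bset p) :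
    ∃ a b : ℝ, π/p ≤ b - a ∧ Ioo a b ⊆ Ioo 0 (2*π) ∧ π ∉ Ioo a b ∧
      Ioo a b ⊆ connectedComponentIn (Bset p) θ := by
  have hπ := Real.pi_pos
  have hp0 : (0:ℝ) < p := by positivity
  have hp3 : (3:ℝ) ≤ (p:ℝ) := by exact_mod_cast hp
  obtain ⟨hdom, hθpi, hgB⟩ := mem_Bset_iff.1 hθ
  by_cases hnz : Real.cos (p*θ/2) ≠ 0
  · obtain ⟨a, b, haθ, hθb, hlen, hsub, hpi, hnzI⟩ := exists_interval p hodd hp hdom hθpi hnz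
    have hθI : θ ∈ Ioo a b := ⟨haθ, hθb⟩
    have hsubB : Ioo a b ⊆ Bset p := by
      intro x hx
      refine mem_Bset_iff.2 ⟨hsub hx, fun hc => hpi (hc ▸ hx), ?_⟩
      intro hneg
      exact hgB (sign_const hsub hpi hnzI hx hθI hneg)
    exact ⟨a, b, hlen, hsub, hpi,
      isPreconnected_Ioo.subset_connectedComponentIn hθI hsubB⟩
  · push_neg at hnz
    obtain ⟨n, hn⟩ := Real.cos_eq_zero_iff.1 hnz
    have hθn : θ = (2*(n:ℝ)+1)*π/p := by
      rw [eq_div_iff (ne_of_gt hp0)]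
      have : (p:ℝ)*θ = (2*n+1)*π := by linarith
      linarith
    -- bounds on n
    have hn0 : 0 ≤ n := by
      have h1 : 0 < (2*(n:ℝ)+1)*π/p := by rw [← hθn]; exact hdom.1
      have h2 : 0 < 2*(n:ℝ)+1 := by
        by_contra hc; push_neg at hc
        have : (2*(n:ℝ)+1)*π/p ≤ 0 := div_nonpos_of_nonpos_of_nonneg (by nlinarith) hp0.le
        linarith
      have : (0:ℤ) < 2*n+1 := by exact_mod_cast h2
      omega
    have hnp : 2*n+1 < 2*(p:ℤ) := by
      have h1 : (2*(n:ℝ)+1)*π/p < 2*π := by rw [← hθn]; exact hdom.2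
      have h2 : (2*(n:ℝ)+1)*π < 2*π*p := by rw [div_lt_iff₀ hp0] at h1; linarith
      have h3 : 2*(n:ℝ)+1 < 2*p := by nlinarith
      exact_mod_cast h3
    have hnpi : 2*n+1 ≠ (p:ℤ) := by
      intro hc
      apply hθpi
      rw [hθn]
      have : (2*(n:ℝ)+1) = p := by exact_mod_cast hc
      rw [this]
      field_simp
    rcases hodd with ⟨m, hm⟩
    have hmk : (p:ℤ) = 2*m+1 := by exact_mod_cast hm
    set aL : ℝ := max ((2*(n:ℝ)-1)*π/p) 0 with haL
    set bR : ℝ := min ((2*(n:ℝ)+3)*π/p) (2*π) with hbR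
    clear_value bR
    clear_value aL
    have hπp : 0 < π/(p:ℝ) := by positivity
    have haLθ : aL < θ := by
      rw [hθn, haL]
      apply max_lt
      · rw [div_lt_div_iff₀ hp0 hp0]; nlinarith
      · rw [hθn] at hdom; positivity
    have hθbR : θ < bR := by
      rw [hθn, hbR]
      apply lt_min
      · rw [div_lt_div_iff₀ hp0 hp0]; nlinarith
      · rw [← hθn]; exact hdom.2
    -- left interval properties
    have haL0 : (0:ℝ) ≤ aL := by rw [haL]; exact le_max_right _ _
    have haL1 : (2*(n:ℝ)-1)*π/p ≤ aL := by rw [haL]; exact le_max_left _ _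
    have hbR1 : bR ≤ 2*π := by rw [hbR]; exact min_le_right _ _
    have hbR2 : bR ≤ (2*(n:ℝ)+3)*π/p := by rw [hbR]; exact min_le_left _ _
    have hsubL : Ioo aL θ ⊆ Ioo 0 (2*π) :=
      Ioo_subset_Ioo haL0 hdom.2.le
    have hpiL : π ∉ Ioo aL θ := by
      intro hmem
      have h1 : (2*(n:ℝ)-1)*π/p < π := lt_of_le_of_lt haL1 hmem.1
      have h2 : π < (2*(n:ℝ)+1)*π/p := by rw [← hθn]; exact hmem.2
      rw [div_lt_iff₀ hp0] at h1
      rw [lt_div_iff₀ hp0] at h2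
      have e1 : 2*(n:ℝ)-1 < p := by nlinarith
      have e2 : (p:ℝ) < 2*n+1 := by nlinarith
      have e1' : (2*n-1:ℤ) < p := by exact_mod_cast e1
      have e2' : (p:ℤ) < 2*n+1 := by exact_mod_cast e2
      omega
    have hnzL : ∀ x ∈ Ioo aL θ, Real.cos (p*x/2) ≠ 0 := by
      intro x hx
      have hx1 : (2*(n:ℝ)-1)*π/p < x := lt_of_le_of_lt haL1 hx.1
      have hx2 : x < (2*(n:ℝ)+1)*π/p := by rw [← hθn]; exact hx.2
      rw [div_lt_iff₀ hp0] at hx1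
      rw [lt_div_iff₀ hp0] at hx2
      exact cos_ne_zero_of_between n (by linarith) (by linarith)
    have hlenL : π/p ≤ θ - aL := by
      by_cases h0 : (2*(n:ℝ)-1)*π/p < 0
      · have hn0' : n = 0 := by
          by_contra hc
          have h1 : (1:ℝ) ≤ (n:ℝ) := by exact_mod_cast (by omega : (1:ℤ) ≤ n)
          have : 0 ≤ (2*(n:ℝ)-1)*π/p := div_nonneg (mul_nonneg (by linarith) hπ.le) hp0.le
          linarith
        rw [haL, max_eq_right h0.le, hθn, hn0']
        push_cast
        ring_nf
        rfl
      · push_neg at h0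
        rw [haL, max_eq_left h0, hθn]
        have e : (2*(n:ℝ)+1)*π/p - (2*(n:ℝ)-1)*π/p = 2*(π/p) := by field_simp; ring
        linarith
    -- right interval properties
    have hsubR : Ioo θ bR ⊆ Ioo 0 (2*π) :=
      Ioo_subset_Ioo hdom.1.le hbR1
    have hpiR : π ∉ Ioo θ bR := by
      intro hmem
      have h1 : (2*(n:ℝ)+1)*π/p < π := by rw [← hθn]; exact hmem.1
      have h2 : π < (2*(n:ℝ)+3)*π/p := lt_of_lt_of_le hmem.2 hbR2
      rw [div_lt_iff₀ hp0] at h1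
      rw [lt_div_iff₀ hp0] at h2
      have e1 : 2*(n:ℝ)+1 < p := by nlinarith
      have e2 : (p:ℝ) < 2*n+3 := by nlinarith
      have e1' : (2*n+1:ℤ) < p := by exact_mod_cast e1
      have e2' : (p:ℤ) < 2*n+3 := by exact_mod_cast e2
      omega
    have hnzR : ∀ x ∈ Ioo θ bR, Real.cos (p*x/2) ≠ 0 := by
      intro x hx
      have hx1 : (2*(n:ℝ)+1)*π/p < x := by rw [← hθn]; exact hx.1
      have hx2 : x < (2*(n:ℝ)+3)*π/p := lt_of_lt_of_le hx.2 hbR2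
      rw [div_lt_iff₀ hp0] at hx1
      rw [lt_div_iff₀ hp0] at hx2
      exact cos_ne_zero_of_between (n+1) (by push_cast; linarith) (by push_cast; linarith)
    have hlenR : π/p ≤ bR - θ := by
      by_cases h2 : (2*(n:ℝ)+3)*π/p ≤ 2*π
      · rw [hbR, min_eq_left h2, hθn]
        have e : (2*(n:ℝ)+3)*π/p - (2*(n:ℝ)+1)*π/p = 2*(π/p) := by field_simp; ring
        linarith
      · push_neg at h2
        have hnp' : n = (p:ℤ) - 1 := by
          by_contra hc
          have h1 : (n:ℝ) ≤ (p:ℝ) - 2 := by exact_mod_cast (by omega : n ≤ (p:ℤ) - 2)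
          have : (2*(n:ℝ)+3)*π/p ≤ 2*π := by
            rw [div_le_iff₀ hp0]; nlinarith
          linarith
        rw [hbR, min_eq_right h2.le, hθn]
        have hnr : (n:ℝ) = (p:ℝ) - 1 := by exact_mod_cast hnp'
        rw [hnr]
        have e : (2*((p:ℝ)-1)+1)*π/p = 2*π - π/p := by field_simp; ring
        rw [e]
        linarith
    by_cases hcase : ∀ x ∈ Ioo aL θ, ¬(Real.cos (p*x/2) * Real.cos (x/2) < 0)
    · -- left interval is in Bset
      have hsubB : Ioc aL θ ⊆ Bset p := by
        intro x hx
        rcases eq_or_lt_of_le hx.2 with heq | hlt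
        · rw [heq]; exact hθ
        · exact mem_Bset_iff.2 ⟨hsubL ⟨hx.1, hlt⟩, fun hc => hpiL (hc ▸ ⟨hx.1, hlt⟩),
            hcase x ⟨hx.1, hlt⟩⟩
      refine ⟨aL, θ, hlenL, hsubL, hpiL, ?_⟩
      exact (Ioo_subset_Ioc_self).trans
        (isPreconnected_Ioc.subset_connectedComponentIn ⟨haLθ, le_refl θ⟩ hsubB)
    · push_neg at hcase
      obtain ⟨x₀, hx₀m, hgx₀⟩ := hcase
      -- show right interval is in Bset
      have hRpos : ∀ x ∈ Ioo θ bR, ¬(Real.cos (p*x/2) * Real.cos (x/2) < 0) := by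
        intro x hxm hgx
        -- n ≥ 1
        have hn1 : 1 ≤ n := by
          by_contra hc
          have hn0'' : n = 0 := by omega
          -- g > 0 on (0, π/p)
          have hθπp : θ = π/(p:ℝ) := by rw [hθn, hn0'']; push_cast; ring
          have hx₀m' : x₀ ∈ Ioo (0:ℝ) (π/(p:ℝ)) := by
            constructor
            · exact lt_of_le_of_lt haL0 hx₀m.1
            · rw [← hθπp]; exact hx₀m.2
          have hppos : 0 < Real.cos (p*x₀/2) := by
            apply Real.cos_pos_of_mem_Ioo
            constructor
            · have : 0 < (p:ℝ)*x₀ := by nlinarith [hx₀m'.1]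
              nlinarith
            · have : (p:ℝ)*x₀ < π := by
                have := hx₀m'.2
                rw [lt_div_iff₀ hp0] at this
                nlinarith
              linarith
          have hhpos : 0 < Real.cos (x₀/2) := by
            apply Real.cos_pos_of_mem_Ioo
            constructor
            · nlinarith [hx₀m'.1]
            · have hπp1 : π/(p:ℝ) ≤ π := div_le_self hπ.le (by exact_mod_cast (by omega : 1 ≤ p))
              have := hx₀m'.2
              nlinarith
          nlinarith [mul_pos hppos hhpos]
        -- n ≤ p - 2
        have hn2 : n ≤ (p:ℤ) - 2 := by
          by_contra hc
          have hnp' : n = (p:ℤ) - 1 := by omega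
          -- g > 0 on ((2p-1)π/p, 2π)
          have hxlow : (2*(p:ℝ)-1)*π/p < x := by
            have := hxm.1
            rw [hθn] at this
            have hnr : (n:ℝ) = (p:ℝ) - 1 := by exact_mod_cast hnp'
            rw [hnr] at this
            have e : (2*((p:ℝ)-1)+1) = 2*(p:ℝ)-1 := by ring
            rw [e] at this
            exact this
          have hxhigh : x < 2*π := (hsubR hxm).2
          -- cos(x/2) < 0 since x > π
          have hxpi' : π < x := by
            have h1 : (2*(p:ℝ)-1)*π/p ≥ π := by
              rw [ge_iff_le, le_div_iff₀ hp0]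
              nlinarith [mul_nonneg (by linarith : (0:ℝ) ≤ (p:ℝ)-1) hπ.le]
            linarith
          have hch : Real.cos (x/2) < 0 := by
            apply Real.cos_neg_of_pi_div_two_lt_of_lt
            · linarith
            · linarith
          -- cos(px/2) < 0
          have hcp : Real.cos (p*x/2) < 0 := by
            have hmr : (p:ℝ) = 2*(m:ℝ)+1 := by exact_mod_cast hm
            have hx1' : (2*(p:ℝ)-1)*π < x*(p:ℝ) := by
              rw [div_lt_iff₀ hp0] at hxlow; exact hxlow
            have hx2' : x*(p:ℝ) < 2*π*(p:ℝ) := by nlinarith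
            have e := Real.cos_sub_int_mul_two_pi ((p:ℝ)*x/2) (m:ℤ)
            rw [← e]
            apply Real.cos_neg_of_pi_div_two_lt_of_lt
            · push_cast
              nlinarith
            · push_cast
              nlinarith
          have := mul_pos_of_neg_of_neg hcp hch
          linarith
        -- middle case: sample points xL, xR
        have hn1r : (1:ℝ) ≤ (n:ℝ) := by exact_mod_cast hn1
        have hn2r : (n:ℝ) ≤ (p:ℝ)-2 := by exact_mod_cast hn2
        have hxLmem : 2*(n:ℝ)*π/p ∈ Ioo aL θ := by
          constructor
          · rw [haL]
            apply max_lt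
            · rw [div_lt_div_iff₀ hp0 hp0]; nlinarith
            · apply div_pos (by nlinarith) hp0
          · rw [hθn, div_lt_div_iff₀ hp0 hp0]; nlinarith
        have hxRmem : (2*(n:ℝ)+2)*π/p ∈ Ioo θ bR := by
          constructor
          · rw [hθn, div_lt_div_iff₀ hp0 hp0]; nlinarith
          · rw [hbR]
            apply lt_min
            · rw [div_lt_div_iff₀ hp0 hp0]; nlinarith
            · rw [div_lt_iff₀ hp0]; nlinarith
        have hgL := sign_const hsubL hpiL hnzL hx₀m hxLmem hgx₀
        have hgR := sign_const hsubR hpiR hnzR hxm hxRmem hgx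
        have hcL : Real.cos ((p:ℝ)*(2*(n:ℝ)*π/p)/2) = Real.cos ((n:ℝ)*π) := by
          congr 1; field_simp
        have hcR : Real.cos ((p:ℝ)*((2*(n:ℝ)+2)*π/p)/2) = -Real.cos ((n:ℝ)*π) := by
          have e : (p:ℝ)*((2*(n:ℝ)+2)*π/p)/2 = (n:ℝ)*π + π := by field_simp
          rw [e, Real.cos_add_pi]
        have hcsq : Real.cos ((n:ℝ)*π) ^ 2 = 1 := by
          have hs : Real.sin ((n:ℝ)*π) = 0 := Real.sin_int_mul_pi n
          have := Real.sin_sq_add_cos_sq ((n:ℝ)*π)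
          nlinarith
        have hxLpi : 2*(n:ℝ)*π/p ≠ π := by
          intro hc
          rw [div_eq_iff (ne_of_gt hp0)] at hc
          have : 2*(n:ℝ) = p := by
            have hπne : π ≠ 0 := ne_of_gt hπ
            have := mul_right_cancel₀ hπne (by linarith : 2*(n:ℝ)*π = (p:ℝ)*π)
            exact this
          have : (2*n:ℤ) = p := by exact_mod_cast this
          omega
        have hxRpi : (2*(n:ℝ)+2)*π/p ≠ π := by
          intro hc
          rw [div_eq_iff (ne_of_gt hp0)] at hc
          have : 2*(n:ℝ)+2 = p := by
            have hπne : π ≠ 0 := ne_of_gt hπ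
            have := mul_right_cancel₀ hπne (by linarith : (2*(n:ℝ)+2)*π = (p:ℝ)*π)
            exact this
          have : (2*n+2:ℤ) = p := by exact_mod_cast this
          omega
        have hside : (2*(n:ℝ)*π/p < π) ↔ ((2*(n:ℝ)+2)*π/p < π) := by
          have hcases : (2*n+3 ≤ (p:ℤ)) ∨ ((p:ℤ) ≤ 2*n-1) := by omega
          rcases hcases with h | h
          · have hr : 2*(n:ℝ)+3 ≤ (p:ℝ) := by exact_mod_cast h
            have h1 : 2*(n:ℝ)*π/p < π := by rw [div_lt_iff₀ hp0]; nlinarith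
            have h2 : (2*(n:ℝ)+2)*π/p < π := by rw [div_lt_iff₀ hp0]; nlinarith
            exact iff_of_true h1 h2
          · have hr : (p:ℝ) ≤ 2*(n:ℝ)-1 := by exact_mod_cast h
            have h1 : ¬(2*(n:ℝ)*π/p < π) := by
              rw [not_lt, le_div_iff₀ hp0]; nlinarith
            have h2 : ¬((2*(n:ℝ)+2)*π/p < π) := by
              rw [not_lt, le_div_iff₀ hp0]; nlinarith
            exact iff_of_false h1 h2
        have hd := same_side_pos (hsubL hxLmem) (hsubR hxRmem) hxLpi hxRpi hside
        have hprod := mul_pos_of_neg_of_neg hgL hgR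
        rw [hcL, hcR] at hprod
        have e2 : (Real.cos ((n:ℝ)*π) * Real.cos ((2*(n:ℝ)*π/p)/2)) *
            (-Real.cos ((n:ℝ)*π) * Real.cos (((2*(n:ℝ)+2)*π/p)/2)) =
            -(Real.cos ((n:ℝ)*π)^2 *
              (Real.cos ((2*(n:ℝ)*π/p)/2) * Real.cos (((2*(n:ℝ)+2)*π/p)/2))) := by ring
        rw [e2, hcsq] at hprod
        linarith
      -- right interval is in Bset
      have hsubB : Ico θ bR ⊆ Bset p := by
        intro y hy
        rcases eq_or_lt_of_le hy.1 with heq | hlt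
        · rw [← heq]; exact hθ
        · exact mem_Bset_iff.2 ⟨hsubR ⟨hlt, hy.2⟩, fun hc => hpiR (hc ▸ ⟨hlt, hy.2⟩),
            hRpos y ⟨hlt, hy.2⟩⟩
      refine ⟨θ, bR, hlenR, hsubR, hpiR, ?_⟩
      exact Ioo_subset_Ico_self.trans
        (isPreconnected_Ico.subset_connectedComponentIn ⟨le_refl θ, hθbR⟩ hsubB)

/-- For every odd `p ≥ 3` there is an odd `q > p` (indeed any sufficiently large odd `q`
works) such that every connected component of `A_p`, and every connected component of its
complement in `(0,2π) \ {π}`, meets both `A_q` and the complement of `A_q`. -/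
theorem component_refinement (p : ℕ) (hodd : Odd p) (hp : 3 ≤ p) :
    ∃ N : ℕ, p < N ∧ ∀ q : ℕ, Odd q → N ≤ q →
      (∀ θ ∈ Aset p,
        (connectedComponentIn (Aset p) θ ∩ Aset q).Nonempty ∧
        (connectedComponentIn (Aset p) θ ∩ Bset q).Nonempty) ∧
      (∀ θ ∈ Bset p,
        (connectedComponentIn (Bset p) θ ∩ Aset q).Nonempty ∧
        (connectedComponentIn (Bset p) θ ∩ Bset q).Nonempty) := by
  refine ⟨5*p, by omega, ?_⟩
  intro q hqodd hqN
  constructor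
  · intro θ hθ
    obtain ⟨a, b, hlen, hsub, hpi, hcomp⟩ := compA p hodd hp hθ
    obtain ⟨⟨x, hx, hxA⟩, ⟨y, hy, hyB⟩⟩ := meets p q hp hqN hqodd hlen hsub hpi
    exact ⟨⟨x, hcomp hx, hxA⟩, ⟨y, hcomp hy, hyB⟩⟩
  · intro θ hθ
    obtain ⟨a, b, hlen, hsub, hpi, hcomp⟩ := compB p hodd hp hθ
    obtain ⟨⟨x, hx, hxA⟩, ⟨y, hy, hyB⟩⟩ := meets p q hp hqN hqodd hlen hsub hpi
    exact ⟨⟨x, hcomp hx, hxA⟩, ⟨y, hcomp hy, hyB⟩⟩
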